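/- Let b ∈ (0,∞], L ≥ 0, α ≥ 0 with L + α > 0, and β > 0, g, u ∈ ℝ. Then u is a fixed point of the constrained hard-thresholding step, i.e., u ∈ H_{β/(L+α), b}((L·u - g)/(L+α)), if and only if (u, g) satisfies the conditions defining H^FP_{α,β,L,b}: setting s := β/(L+α), either |u| = b with appropriate sign condition on g (u = -b requires g ≥ (L+α)max(b, b/2+s/b) - Lb, symmetrically for u = b), or u = 0 with |g| ≤ (L+α)(b/2+s/b) when b ≤ √(2s) and |g| ≤ (L+α)√(2s) when b ≥ √(2s), or 0 < |u| < b with αu = -g and |q| ∈ [√(2s), b] where q = -(Lu - g)/(L+α). -/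

import Mathlib

open scoped ENNReal

/-- The "L⁰ norm" of a real number: 0 if `u = 0`, else 1. -/
noncomputable def nrm0 (u : ℝ) : ℝ := if u = 0 then 0 else 1

/-- `H_{s,b}(q)` with bound `b ∈ (0,∞]`: the set of global minimizers of
`v ↦ -q·v + v²/2 + s·|v|₀` over `{v : |v| ≤ b}`. -/
def Hsb (s : ℝ) (b : ℝ≥0∞) (q : ℝ) : Set ℝ :=
  {u | ENNReal.ofReal |u| ≤ b ∧ ∀ v : ℝ, ENNReal.ofReal |v| ≤ b →
        -q * u + u ^ 2 / 2 + s * nrm0 u ≤ -q * v + v ^ 2 / 2 + s * nrm0 v}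

lemma nrm0_zero : nrm0 0 = 0 := if_pos rfl

lemma nrm0_ne {u : ℝ} (h : u ≠ 0) : nrm0 u = 1 := if_neg h

lemma abs_le_sqrt2 {s q : ℝ} (h : q ^ 2 ≤ 2 * s) : |q| ≤ Real.sqrt (2 * s) := by
  rw [← Real.sqrt_sq_eq_abs]; exact Real.sqrt_le_sqrt h

lemma sq_le_of_abs_le {s q : ℝ} (hs : 0 ≤ s) (h : |q| ≤ Real.sqrt (2 * s)) :
    q ^ 2 ≤ 2 * s := by
  have h2 := Real.sq_sqrt (by linarith : (0:ℝ) ≤ 2 * s)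
  nlinarith [pow_le_pow_left₀ (abs_nonneg q) h 2, sq_abs q]

lemma sqrt2_le_abs {s q : ℝ} (h : 2 * s ≤ q ^ 2) : Real.sqrt (2 * s) ≤ |q| := by
  rw [← Real.sqrt_sq_eq_abs]; exact Real.sqrt_le_sqrt h

lemma sq_le_of_sqrt_le {s q : ℝ} (hs : 0 ≤ s) (h : Real.sqrt (2 * s) ≤ |q|) :
    2 * s ≤ q ^ 2 := by
  have h2 := Real.sq_sqrt (by linarith : (0:ℝ) ≤ 2 * s)
  nlinarith [pow_le_pow_left₀ (Real.sqrt_nonneg (2 * s)) h 2, sq_abs q]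

/-- If `u` is a nonzero minimizer lying strictly inside the ball, then `u = q`. -/
lemma interior_eq (s q u B : ℝ) (hu : u ≠ 0) (huB : |u| < B)
    (h : ∀ v : ℝ, v ≠ 0 → |v| ≤ B →
      -q * u + u ^ 2 / 2 + s ≤ -q * v + v ^ 2 / 2 + s) : u = q := by
  by_contra hne
  have hd : q - u ≠ 0 := fun h' => hne (by have := sub_eq_zero.mp h'; linarith)
  have hd0 : 0 < |q - u| := abs_pos.mpr hd
  have hu0 : 0 < |u| := abs_pos.mpr hu
  set c : ℝ := min 1 (min ((B - |u|) / |q - u|) (|u| / (2 * |q - u|))) with hc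
  have hc0 : 0 < c :=
    lt_min (by norm_num)
      (lt_min (div_pos (by linarith) hd0) (div_pos (by linarith) (by linarith)))
  have hc1 : c ≤ 1 := min_le_left _ _
  have h1 : c ≤ (B - |u|) / |q - u| := le_trans (min_le_right _ _) (min_le_left _ _)
  have h2 : c ≤ |u| / (2 * |q - u|) := le_trans (min_le_right _ _) (min_le_right _ _)
  have habs : |q - u| ≠ 0 := hd0.ne'
  have hcB : c * |q - u| ≤ B - |u| := by
    calc c * |q - u| ≤ ((B - |u|) / |q - u|) * |q - u| :=
          mul_le_mul_of_nonneg_right h1 hd0.le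
      _ = B - |u| := div_mul_cancel₀ _ habs
  have hcu : c * |q - u| ≤ |u| / 2 := by
    calc c * |q - u| ≤ (|u| / (2 * |q - u|)) * |q - u| :=
          mul_le_mul_of_nonneg_right h2 hd0.le
      _ = |u| / 2 := by field_simp
  set v : ℝ := u + c * (q - u) with hv
  have hvabs : |c * (q - u)| = c * |q - u| := by
    rw [abs_mul, abs_of_pos hc0]
  have hvB : |v| ≤ B := by
    calc |v| ≤ |u| + |c * (q - u)| := abs_add_le _ _
      _ = |u| + c * |q - u| := by rw [hvabs]
      _ ≤ B := by linarith
  have hv0 : v ≠ 0 := by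
    have : |u| ≤ |v| + c * |q - u| := by
      calc |u| = |v - c * (q - u)| := by rw [hv]; ring_nf
        _ ≤ |v| + |c * (q - u)| := abs_sub _ _
        _ = |v| + c * |q - u| := by rw [hvabs]
    have : 0 < |v| := by linarith
    exact abs_pos.mp this
  have hle := h v hv0 hvB
  rw [hv] at hle
  have hq2 : 0 < (q - u) ^ 2 := by positivity
  nlinarith [mul_pos hc0 hq2, mul_le_mul_of_nonneg_right hc1 (mul_pos hc0 hq2).le]

/-- Characterization of global minimizers in the unbounded case. -/
lemma minimizer_top (s q u : ℝ) (hs : 0 < s) :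
    (∀ v : ℝ, -q * u + u ^ 2 / 2 + s * nrm0 u ≤ -q * v + v ^ 2 / 2 + s * nrm0 v) ↔
      (u = 0 ∧ |q| ≤ Real.sqrt (2 * s)) ∨
      (u ≠ 0 ∧ u = q ∧ Real.sqrt (2 * s) ≤ |q|) := by
  constructor
  · intro h
    by_cases hu0 : u = 0
    · subst hu0; left; refine ⟨rfl, ?_⟩
      apply abs_le_sqrt2
      by_cases hq : q = 0
      · subst hq; nlinarith
      · have := h q; rw [nrm0_zero, nrm0_ne hq] at this; nlinarith
    · right
      have huq : u = q := by
        refine interior_eq s q u (max |u| |q| + 1) hu0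
          (lt_of_le_of_lt (le_max_left _ _) (lt_add_one _)) (fun v hv _ => ?_)
        have := h v
        rwa [nrm0_ne hu0, nrm0_ne hv, mul_one] at this
      have h0 := h 0
      rw [nrm0_ne hu0, nrm0_zero] at h0
      have hq2 : 2 * s ≤ q ^ 2 := by rw [huq] at h0; nlinarith
      exact ⟨hu0, huq, sqrt2_le_abs hq2⟩
  · rintro (⟨rfl, hq⟩ | ⟨hu0, huq, hq⟩)
    · intro v
      have hq2 : q ^ 2 ≤ 2 * s := sq_le_of_abs_le hs.le hq
      rw [nrm0_zero]
      by_cases hv : v = 0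
      · subst hv; rw [nrm0_zero]
      · rw [nrm0_ne hv]; nlinarith [sq_nonneg (v - q)]
    · subst huq
      intro v
      have hq2 : 2 * s ≤ u ^ 2 := sq_le_of_sqrt_le hs.le hq
      rw [nrm0_ne hu0]
      by_cases hv : v = 0
      · subst hv; rw [nrm0_zero]; nlinarith
      · rw [nrm0_ne hv]; nlinarith [sq_nonneg (v - u)]

set_option maxHeartbeats 1000000 in
/-- Characterization of global minimizers in the bounded case. -/
lemma minimizer_fin (s B q u : ℝ) (hs : 0 < s) (hB : 0 < B) :
    (|u| ≤ B ∧ ∀ v : ℝ, |v| ≤ B →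
        -q * u + u ^ 2 / 2 + s * nrm0 u ≤ -q * v + v ^ 2 / 2 + s * nrm0 v) ↔
      (u = -B ∧ max B (B / 2 + s / B) ≤ -q) ∨
      (u = B ∧ max B (B / 2 + s / B) ≤ q) ∨
      (u = 0 ∧ ((B ≤ Real.sqrt (2 * s) ∧ |q| ≤ B / 2 + s / B) ∨
                (Real.sqrt (2 * s) ≤ B ∧ |q| ≤ Real.sqrt (2 * s)))) ∨
      (0 < |u| ∧ |u| < B ∧ u = q ∧ Real.sqrt (2 * s) ≤ |q| ∧ |q| ≤ B) := by
  have hdiv : s / B * B = s := div_mul_cancel₀ s hB.ne'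
  constructor
  · rintro ⟨huB, h⟩
    by_cases hu0 : u = 0
    · subst hu0
      right; right; left
      refine ⟨rfl, ?_⟩
      have h' : ∀ v : ℝ, v ≠ 0 → |v| ≤ B → 0 ≤ -q * v + v ^ 2 / 2 + s := by
        intro v hv hvB
        have := h v hvB
        rw [nrm0_zero, nrm0_ne hv] at this
        nlinarith
      by_cases hqB : |q| ≤ B
      · have hq2 : q ^ 2 ≤ 2 * s := by
          by_cases hq0 : q = 0
          · subst hq0; nlinarith
          · have := h' q hq0 hqB; nlinarith
        have habs : |q| ≤ Real.sqrt (2 * s) := abs_le_sqrt2 hq2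
        by_cases htB : Real.sqrt (2 * s) ≤ B
        · exact Or.inr ⟨htB, habs⟩
        · push_neg at htB
          left
          refine ⟨htB.le, ?_⟩
          have hts : (Real.sqrt (2 * s)) ^ 2 = 2 * s := Real.sq_sqrt (by positivity)
          nlinarith [sq_nonneg (B - Real.sqrt (2 * s)), habs, hB, hdiv]
      · push_neg at hqB
        rcases le_or_gt 0 q with hq | hq
        · have h1 := h' B hB.ne' (by rw [abs_of_pos hB])
          have hqb : |q| ≤ B / 2 + s / B := by
            rw [abs_of_nonneg hq]; nlinarith
          have habsq : B < q := by rwa [abs_of_nonneg hq] at hqB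
          left
          refine ⟨?_, hqb⟩
          have hB2 : B ^ 2 ≤ 2 * s := by
            rw [abs_of_nonneg hq] at hqb; nlinarith
          rw [← Real.sqrt_sq hB.le]
          exact Real.sqrt_le_sqrt hB2
        · have h1 := h' (-B) (by intro hh; nlinarith) (by rw [abs_neg, abs_of_pos hB])
          have hqb : |q| ≤ B / 2 + s / B := by
            rw [abs_of_neg hq]; nlinarith
          have habsq : B < -q := by rwa [abs_of_neg hq] at hqB
          left
          refine ⟨?_, hqb⟩
          have hB2 : B ^ 2 ≤ 2 * s := by
            rw [abs_of_neg hq] at hqb; nlinarith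
          rw [← Real.sqrt_sq hB.le]
          exact Real.sqrt_le_sqrt hB2
    · have hu0' : 0 < |u| := abs_pos.mpr hu0
      by_cases huB' : |u| = B
      · rcases (abs_eq hB.le).mp huB' with hEq | hEq
        · -- u = B
          have h0 := h 0 (by rw [abs_zero]; exact hB.le)
          rw [hEq, nrm0_zero, nrm0_ne hB.ne'] at h0
          have hsB : 0 < s / B := div_pos hs hB
          have hq1 : B / 2 + s / B ≤ q := by nlinarith
          have hq2 : B ≤ q := by
            by_contra hlt
            push_neg at hlt
            have hqpos : 0 < q := by nlinarith
            have hq := h q (by rw [abs_of_pos hqpos]; exact hlt.le)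
            rw [hEq, nrm0_ne hB.ne', nrm0_ne hqpos.ne'] at hq
            nlinarith [mul_pos (sub_pos.mpr hlt) (sub_pos.mpr hlt)]
          exact Or.inr (Or.inl ⟨hEq, max_le hq2 hq1⟩)
        · -- u = -B
          have hBne : -B ≠ 0 := by intro hh; nlinarith
          have h0 := h 0 (by rw [abs_zero]; exact hB.le)
          rw [hEq, nrm0_zero, nrm0_ne hBne] at h0
          have hsB : 0 < s / B := div_pos hs hB
          have hq1 : B / 2 + s / B ≤ -q := by nlinarith
          have hq2 : B ≤ -q := by
            by_contra hlt
            push_neg at hlt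
            have hqneg : q < 0 := by nlinarith
            have hq := h q (by rw [abs_of_neg hqneg]; linarith)
            rw [hEq, nrm0_ne hBne, nrm0_ne hqneg.ne] at hq
            have hne : 0 < q + B := by linarith
            nlinarith [mul_pos hne hne]
          exact Or.inl ⟨hEq, max_le hq2 hq1⟩
      · have hlt : |u| < B := lt_of_le_of_ne huB huB'
        have huq : u = q := by
          refine interior_eq s q u B hu0 hlt (fun v hv hvB => ?_)
          have := h v hvB
          rwa [nrm0_ne hu0, nrm0_ne hv, mul_one] at this
        have h0 := h 0 (by rw [abs_zero]; exact hB.le)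
        rw [nrm0_ne hu0, nrm0_zero] at h0
        have hq2 : 2 * s ≤ q ^ 2 := by rw [huq] at h0; nlinarith
        exact Or.inr (Or.inr (Or.inr
          ⟨hu0', hlt, huq, sqrt2_le_abs hq2, by rw [← huq]; exact huB⟩))
  · rintro (⟨rfl, hM⟩ | ⟨hEq, hM⟩ | ⟨rfl, hcond⟩ | ⟨hu0, hltB, huq, ht, hqB⟩)
    · -- u = -B
      have hMB : B ≤ -q := (max_le_iff.mp hM).1
      have hMs : B / 2 + s / B ≤ -q := (max_le_iff.mp hM).2
      have hBne : -B ≠ 0 := by intro hh; nlinarith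
      refine ⟨by rw [abs_neg, abs_of_pos hB], fun v hvB => ?_⟩
      rw [nrm0_ne hBne]
      by_cases hv : v = 0
      · subst hv; rw [nrm0_zero]; nlinarith
      · rw [nrm0_ne hv]
        have hv1 : -B ≤ v := (abs_le.mp hvB).1
        nlinarith [mul_nonneg (show (0:ℝ) ≤ B + v by linarith)
          (show (0:ℝ) ≤ -q - B by linarith), sq_nonneg (B + v)]
    · -- u = B
      have hMB : B ≤ q := (max_le_iff.mp hM).1
      have hMs : B / 2 + s / B ≤ q := (max_le_iff.mp hM).2
      refine ⟨by rw [hEq, abs_of_pos hB], fun v hvB => ?_⟩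
      rw [hEq, nrm0_ne hB.ne']
      by_cases hv : v = 0
      · subst hv; rw [nrm0_zero]; nlinarith
      · rw [nrm0_ne hv]
        have hv1 : v ≤ B := (abs_le.mp hvB).2
        nlinarith [mul_nonneg (show (0:ℝ) ≤ B - v by linarith)
          (show (0:ℝ) ≤ q - B by linarith), sq_nonneg (B - v)]
    · -- u = 0
      refine ⟨by rw [abs_zero]; exact hB.le, fun v hvB => ?_⟩
      rw [nrm0_zero]
      by_cases hv : v = 0
      · subst hv; rw [nrm0_zero]
      · rw [nrm0_ne hv]
        rcases hcond with ⟨hBt, hqb⟩ | ⟨htB, hqt⟩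
        · by_cases hqt : |q| ≤ Real.sqrt (2 * s)
          · have hq2 : q ^ 2 ≤ 2 * s := sq_le_of_abs_le hs.le hqt
            nlinarith [sq_nonneg (v - q)]
          · push_neg at hqt
            have hBq : B ≤ |q| := le_trans hBt hqt.le
            have hqvb : q * v ≤ |q| * |v| := by
              calc q * v ≤ |q * v| := le_abs_self _
                _ = |q| * |v| := abs_mul q v
            have key : |q| * |v| - v ^ 2 / 2 ≤ s := by
              have k1 : |q| * B - B ^ 2 / 2 ≤ s := by nlinarith
              have k2 : |q| * |v| - |v| ^ 2 / 2 ≤ |q| * B - B ^ 2 / 2 := by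
                nlinarith [mul_nonneg (sub_nonneg.mpr hvB)
                  (show (0:ℝ) ≤ |q| - (B + |v|) / 2 by nlinarith [abs_nonneg v])]
              nlinarith [sq_abs v]
            nlinarith
        · have hq2 : q ^ 2 ≤ 2 * s := sq_le_of_abs_le hs.le hqt
          nlinarith [sq_nonneg (v - q)]
    · -- interior
      subst huq
      have hq0 : u ≠ 0 := abs_pos.mp hu0
      have hq2 : 2 * s ≤ u ^ 2 := sq_le_of_sqrt_le hs.le ht
      refine ⟨hltB.le, fun v hvB => ?_⟩
      rw [nrm0_ne hq0]
      by_cases hv : v = 0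
      · subst hv; rw [nrm0_zero]; nlinarith
      · rw [nrm0_ne hv]; nlinarith [sq_nonneg (v - u)]

/-- Characterization of `L`-stationary points (Lemma 3.17): `u` is a fixed point of the
constrained hard-thresholding step, i.e. `u ∈ H_{β/(L+α),b}((Lu - g)/(L+α))`, iff (with
`s = β/(L+α)`, `q = -(Lu-g)/(L+α)`) either `|u| = b` with the appropriate sign condition
on `g`, or `u = 0` with the appropriate bound on `|g|`, or `0 < |u| < b` with `αu = -g`
and `|q| ∈ [√(2s), b]`. -/
theorem L_stationarity_characterization (β L α : ℝ) (b : ℝ≥0∞)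
    (hβ : 0 < β) (hb : 0 < b) (hL : 0 ≤ L) (hα : 0 ≤ α) (hLα : 0 < L + α)
    (g u : ℝ) :
    u ∈ Hsb (β / (L + α)) b ((L * u - g) / (L + α)) ↔
      (if b = ⊤ then
        (u = 0 ∧ |g| ≤ (L + α) * Real.sqrt (2 * (β / (L + α)))) ∨
        (u ≠ 0 ∧ α * u = -g ∧
          Real.sqrt (2 * (β / (L + α))) ≤ |(L * u - g) / (L + α)|)
      else
        (u = -b.toReal ∧
          (L + α) * max b.toReal (b.toReal / 2 + (β / (L + α)) / b.toReal) - L * b.toReal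
            ≤ g) ∨
        (u = b.toReal ∧
          g ≤ -((L + α) * max b.toReal (b.toReal / 2 + (β / (L + α)) / b.toReal)
            - L * b.toReal)) ∨
        (u = 0 ∧
          ((b.toReal ≤ Real.sqrt (2 * (β / (L + α))) ∧
            |g| ≤ (L + α) * (b.toReal / 2 + (β / (L + α)) / b.toReal)) ∨
           (Real.sqrt (2 * (β / (L + α))) ≤ b.toReal ∧
            |g| ≤ (L + α) * Real.sqrt (2 * (β / (L + α)))))) ∨
        (0 < |u| ∧ |u| < b.toReal ∧ α * u = -g ∧
          Real.sqrt (2 * (β / (L + α))) ≤ |(L * u - g) / (L + α)| ∧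
          |(L * u - g) / (L + α)| ≤ b.toReal)) := by
  have hLα' : (L + α) ≠ 0 := hLα.ne'
  set s : ℝ := β / (L + α) with hsdef
  have hs : 0 < s := div_pos hβ hLα
  set q : ℝ := (L * u - g) / (L + α) with hqdef
  have hq_eq : (L + α) * q = L * u - g := by
    rw [hqdef]; field_simp
  have hiff_q : u = q ↔ α * u = -g := by
    constructor
    · intro h
      rw [← h] at hq_eq
      linear_combination hq_eq
    · intro h
      rw [hqdef, eq_div_iff hLα']
      linear_combination h
  simp only [Hsb, Set.mem_setOf_eq]
  by_cases hbt : b = ⊤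
  · subst hbt
    rw [if_pos rfl]
    simp only [le_top, true_and, true_implies]
    rw [minimizer_top s q u hs]
    constructor
    · rintro (⟨rfl, h⟩ | ⟨hu, huq, h⟩)
      · left
        refine ⟨rfl, ?_⟩
        have habsq : (L + α) * |q| = |g| := by
          rw [hqdef, show L * 0 - g = -g by ring, abs_div, abs_neg, abs_of_pos hLα]
          field_simp
        nlinarith [mul_le_mul_of_nonneg_left h hLα.le]
      · exact Or.inr ⟨hu, hiff_q.mp huq, h⟩
    · rintro (⟨rfl, h⟩ | ⟨hu, hg, h⟩)
      · left
        refine ⟨rfl, ?_⟩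
        have habsq : (L + α) * |q| = |g| := by
          rw [hqdef, show L * 0 - g = -g by ring, abs_div, abs_neg, abs_of_pos hLα]
          field_simp
        nlinarith [Real.sqrt_nonneg (2 * s)]
      · exact Or.inr ⟨hu, hiff_q.mpr hg, h⟩
  · rw [if_neg hbt]
    have hB : 0 < b.toReal := ENNReal.toReal_pos hb.ne' hbt
    set B := b.toReal with hBdef
    have hof : ∀ x : ℝ, (ENNReal.ofReal |x| ≤ b ↔ |x| ≤ B) := fun x =>
      ENNReal.ofReal_le_iff_le_toReal hbt
    constructor
    · rintro ⟨h1, h2⟩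
      have hk := (minimizer_fin s B q u hs hB).mp
        ⟨(hof u).mp h1, fun v hv => h2 v ((hof v).mpr hv)⟩
      rcases hk with ⟨rfl, hM⟩ | ⟨rfl, hM⟩ | ⟨rfl, hM⟩ | ⟨h3, h4, h5, h6, h7⟩
      · left
        refine ⟨rfl, ?_⟩
        nlinarith [hq_eq, mul_le_mul_of_nonneg_left hM hLα.le]
      · right; left
        refine ⟨rfl, ?_⟩
        nlinarith [hq_eq, mul_le_mul_of_nonneg_left hM hLα.le]
      · right; right; left
        refine ⟨rfl, ?_⟩
        have habsq : (L + α) * |q| = |g| := by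
          rw [hqdef, show L * 0 - g = -g by ring, abs_div, abs_neg, abs_of_pos hLα]
          field_simp
        rcases hM with ⟨ht, hq⟩ | ⟨ht, hq⟩
        · exact Or.inl ⟨ht, by nlinarith [mul_le_mul_of_nonneg_left hq hLα.le]⟩
        · exact Or.inr ⟨ht, by nlinarith [mul_le_mul_of_nonneg_left hq hLα.le]⟩
      · exact Or.inr (Or.inr (Or.inr ⟨h3, h4, hiff_q.mp h5, h6, h7⟩))
    · intro h
      have hm : _ := (minimizer_fin s B q u hs hB).mpr ?_
      · exact ⟨(hof u).mpr hm.1, fun v hv => hm.2 v ((hof v).mp hv)⟩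
      rcases h with ⟨rfl, hg⟩ | ⟨rfl, hg⟩ | ⟨rfl, hg⟩ | ⟨h3, h4, h5, h6, h7⟩
      · left
        refine ⟨rfl, max_le ?_ ?_⟩
        · nlinarith [hq_eq, le_max_left B (B / 2 + s / B)]
        · nlinarith [hq_eq, le_max_right B (B / 2 + s / B)]
      · right; left
        refine ⟨rfl, max_le ?_ ?_⟩
        · nlinarith [hq_eq, le_max_left B (B / 2 + s / B)]
        · nlinarith [hq_eq, le_max_right B (B / 2 + s / B)]
      · right; right; left
        refine ⟨rfl, ?_⟩
        have habsq : (L + α) * |q| = |g| := by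
          rw [hqdef, show L * 0 - g = -g by ring, abs_div, abs_neg, abs_of_pos hLα]
          field_simp
        rcases hg with ⟨ht, hq⟩ | ⟨ht, hq⟩
        · refine Or.inl ⟨ht, ?_⟩
          nlinarith [abs_nonneg g]
        · refine Or.inr ⟨ht, ?_⟩
          nlinarith [abs_nonneg g]
      · exact Or.inr (Or.inr (Or.inr ⟨h3, h4, hiff_q.mpr h5, h6, h7⟩))
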